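/- Let d ≥ 2 and let A be the real (d−1)×d matrix whose first column has every entry equal to 1 and whose remaining d−1 columns form the identity matrix (A_{i,1} = 1 for all i, and for 1 ≤ i, j ≤ d−1, A_{i,j+1} = 1 if i = j and 0 otherwise). Then for all vectors α, β ∈ ℝ^{d−1}, Σ_{j=1}^{d−1} ‖A^j − α_j · (Σ_{i=1}^{d−1} β_i A^i)‖₁ ≥ 2(d−2); in other words, every (d−1)×d matrix of rank at most 1 all of whose rows lie in the row span of A has entrywise ℓ1-distance at least 2(d−2) from A. -/

import Mathlib

open Matrix

section aux

lemma two_max_eq (x : ℝ) : 2 * max x 0 = |x| + x := by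
  rcases le_total x 0 with h | h
  · rw [max_eq_right h, abs_of_nonpos h]; ring
  · rw [max_eq_left h, abs_of_nonneg h]; ring

lemma sum_abs_single {m : ℕ} (β : Fin m → ℝ) (j : Fin m) :
    |β j| + |(∑ i, β i) - β j| ≤ ∑ i, |β i| := by
  classical
  have h1 : ∑ i ∈ Finset.univ.erase j, β i + β j = ∑ i, β i :=
    Finset.sum_erase_add _ _ (Finset.mem_univ j)
  have h2 : |(∑ i, β i) - β j| ≤ ∑ i ∈ Finset.univ.erase j, |β i| := by
    have : (∑ i, β i) - β j = ∑ i ∈ Finset.univ.erase j, β i := by linarith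
    rw [this]
    exact Finset.abs_sum_le_sum_abs _ _
  have h3 : ∑ i ∈ Finset.univ.erase j, |β i| + |β j| = ∑ i, |β i| :=
    Finset.sum_erase_add _ _ (Finset.mem_univ j)
  linarith

lemma sum_abs_pair {m : ℕ} (β : Fin m → ℝ) {j k : Fin m} (hjk : j ≠ k) :
    |β j| + |β k| + |(∑ i, β i) - β j - β k| ≤ ∑ i, |β i| := by
  classical
  have hkmem : k ∈ Finset.univ.erase j := Finset.mem_erase.2 ⟨hjk.symm, Finset.mem_univ k⟩
  have h1 : ∑ i ∈ Finset.univ.erase j, β i + β j = ∑ i, β i :=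
    Finset.sum_erase_add _ _ (Finset.mem_univ j)
  have h1' : ∑ i ∈ (Finset.univ.erase j).erase k, β i + β k = ∑ i ∈ Finset.univ.erase j, β i :=
    Finset.sum_erase_add _ _ hkmem
  have h2 : |(∑ i, β i) - β j - β k| ≤ ∑ i ∈ (Finset.univ.erase j).erase k, |β i| := by
    have : (∑ i, β i) - β j - β k = ∑ i ∈ (Finset.univ.erase j).erase k, β i := by linarith
    rw [this]
    exact Finset.abs_sum_le_sum_abs _ _
  have h3 : ∑ i ∈ Finset.univ.erase j, |β i| + |β j| = ∑ i, |β i| :=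
    Finset.sum_erase_add _ _ (Finset.mem_univ j)
  have h3' : ∑ i ∈ (Finset.univ.erase j).erase k, |β i| + |β k|
      = ∑ i ∈ Finset.univ.erase j, |β i| :=
    Finset.sum_erase_add _ _ hkmem
  linarith

/-- Per-row lower bound. -/
lemma row_bound (a s b σ : ℝ) (h1 : |b| + |s - b| ≤ σ) :
    2 - max (|s| + 2 * |b| - σ) 0 / max |s| |b|
      ≤ |1 - a * s| + |1 - a * b| + |a| * (σ - |b|) := by
  set N := max (|s| + 2 * |b| - σ) 0 with hNdef
  set M := max |s| |b| with hMdef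
  have hN0 : 0 ≤ N := le_max_right _ _
  have hM0 : 0 ≤ M := le_trans (abs_nonneg s) (le_max_left _ _)
  have habs1 : |s| - |b| ≤ |s - b| := abs_sub_abs_le_abs_sub s b
  have habs2 : |b| - |s| ≤ |s - b| := by
    rw [abs_sub_comm]; exact abs_sub_abs_le_abs_sub b s
  have hsM : |s| ≤ M := le_max_left _ _
  have hbM : |b| ≤ M := le_max_right _ _
  have hNM : N ≤ 2 * M := by
    apply max_le
    · linarith
    · linarith
  have e1 : 1 - |a| * |s| ≤ |1 - a * s| := by
    have h := abs_sub_abs_le_abs_sub (1 : ℝ) (a * s)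
    rw [abs_one, abs_mul] at h
    linarith
  have e2 : 1 - |a| * |b| ≤ |1 - a * b| := by
    have h := abs_sub_abs_le_abs_sub (1 : ℝ) (a * b)
    rw [abs_one, abs_mul] at h
    linarith
  have key1 : 2 - |a| * N ≤ |1 - a * s| + |1 - a * b| + |a| * (σ - |b|) := by
    have hNge : |s| + 2 * |b| - σ ≤ N := le_max_left _ _
    have h5 : |a| * (-N) ≤ |a| * (σ - |s| - 2 * |b|) :=
      mul_le_mul_of_nonneg_left (by linarith) (abs_nonneg a)
    have hexp1 : |a| * (-N) = -(|a| * N) := by ring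
    have hexp2 : |a| * (σ - |s| - 2 * |b|) = |a| * (σ - |b|) - |a| * |s| - |a| * |b| := by ring
    rw [hexp1, hexp2] at h5
    linarith
  have key2 : |a| * (2 * M - N) ≤ |1 - a * s| + |1 - a * b| + |a| * (σ - |b|) := by
    have e4 : |a| * |s - b| ≤ |1 - a * b| + |1 - a * s| := by
      have h := abs_add_le (1 - a * b) (-(1 - a * s))
      have h2 : (1 - a * b) + -(1 - a * s) = a * (s - b) := by ring
      rw [h2, abs_neg, abs_mul] at h
      linarith
    have hNge : |s| + 2 * |b| - σ ≤ N := le_max_left _ _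
    have e5 : 2 * M - N ≤ |s - b| + (σ - |b|) := by
      rcases le_total |s| |b| with h | h
      · have : M = |b| := max_eq_right h
        linarith
      · have : M = |s| := max_eq_left h
        linarith
    have h6 : |a| * (2 * M - N) ≤ |a| * (|s - b| + (σ - |b|)) :=
      mul_le_mul_of_nonneg_left e5 (abs_nonneg a)
    have h7 : |a| * (|s - b| + (σ - |b|)) = |a| * |s - b| + |a| * (σ - |b|) := by ring
    linarith
  rcases le_or_gt (|a| * M) 1 with hc | hc
  · rcases eq_or_lt_of_le hM0 with hM' | hM'
    · have hNz : N = 0 := by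
        apply le_antisymm _ hN0
        rw [← hM'] at hNM
        linarith
      rw [hNz, zero_div]
      have : |a| * N = 0 := by rw [hNz, mul_zero]
      linarith
    · have hdiv : |a| * N ≤ N / M := by
        rw [le_div_iff₀ hM']
        nlinarith [mul_nonneg hN0 (sub_nonneg.2 hc)]
      linarith
  · have hM' : 0 < M := by nlinarith [abs_nonneg a]
    have h8 : 0 ≤ 2 * M - N := by linarith
    have h9 : 1 / M ≤ |a| := by
      rw [div_le_iff₀ hM']
      linarith
    have h10 : (2 * M - N) / M ≤ |a| * (2 * M - N) := by
      have := mul_le_mul_of_nonneg_right h9 h8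
      calc (2 * M - N) / M = 1 / M * (2 * M - N) := by ring
        _ ≤ |a| * (2 * M - N) := this
    have h11 : (2 * M - N) / M = 2 - N / M := by
      field_simp
    linarith
end aux

section glob

lemma global_aux {m : ℕ} (β : Fin m → ℝ) (s σ : ℝ) (hs : 0 ≤ s)
    (hsum : s = ∑ i, β i) (hsig : σ = ∑ i, |β i|) :
    ∑ j, max (s + 2 * |β j| - σ) 0 / max s |β j| ≤ 2 := by
  classical
  have hσs : s ≤ σ := by
    rw [hsum, hsig]
    exact Finset.sum_le_sum (fun i _ => le_abs_self _)
  have hsingle : ∀ j, |β j| + |s - β j| ≤ σ := by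
    intro j; rw [hsum, hsig]; exact sum_abs_single β j
  have hpair : ∀ j k, j ≠ k → |β j| + |β k| + |s - β j - β k| ≤ σ := by
    intro j k hjk; rw [hsum, hsig]; exact sum_abs_pair β hjk
  have hNnn : ∀ j, (0:ℝ) ≤ max (s + 2 * |β j| - σ) 0 := fun j => le_max_right _ _
  have hvanish : ∀ j, β j ≤ 0 → max (s + 2 * |β j| - σ) 0 = 0 := by
    intro j hj
    apply max_eq_right
    have h1 := hsingle j
    have h2 : |s - β j| = s - β j := abs_of_nonneg (by linarith)
    have h3 : |β j| = -β j := abs_of_nonpos hj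
    rw [h2, h3] at h1
    rw [h3]
    linarith
  have hGpair : ∀ j k, j ≠ k → s < β k → max (s + 2 * |β j| - σ) 0 = 0 := by
    intro j k hjk hk
    rcases le_or_gt (β j) 0 with h | h
    · exact hvanish j h
    · apply max_eq_right
      have h1 := hpair j k hjk
      have h2 : |β j| = β j := abs_of_pos h
      have h3 : |β k| = β k := abs_of_pos (by linarith)
      have h4 : β j + β k - s ≤ |s - β j - β k| := by
        calc β j + β k - s ≤ |β j + β k - s| := le_abs_self _
          _ = |s - β j - β k| := by rw [abs_sub_comm]; ring_nf
      rw [h2, h3] at h1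
      rw [h2]
      linarith
  by_cases hk : ∃ k, s < β k
  · obtain ⟨k, hk⟩ := hk
    by_cases hm : ∃ m', m' ≠ k ∧ s < β m'
    · obtain ⟨m', hm'k, hm'⟩ := hm
      have hz : ∀ j ∈ Finset.univ, max (s + 2 * |β j| - σ) 0 / max s |β j| = 0 := by
        intro j _
        rcases eq_or_ne j k with h | h
        · have hjm : j ≠ m' := by rw [h]; exact hm'k.symm
          rw [hGpair j m' hjm hm', zero_div]
        · rw [hGpair j k h hk, zero_div]
      rw [Finset.sum_eq_zero hz]
      norm_num
    · push_neg at hm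
      have hterm : ∀ j ∈ Finset.univ, j ≠ k →
          max (s + 2 * |β j| - σ) 0 / max s |β j| = 0 := by
        intro j _ hj
        rw [hGpair j k hj hk, zero_div]
      rw [Finset.sum_eq_single_of_mem k (Finset.mem_univ k) hterm]
      have hbk : 0 < β k := lt_of_le_of_lt hs hk
      have habs : |β k| = β k := abs_of_pos hbk
      have hmax : max s |β k| = β k := by rw [habs]; exact max_eq_right hk.le
      have h1 := hsingle k
      have h2 : β k - s ≤ |s - β k| := by
        calc β k - s ≤ |β k - s| := le_abs_self _
          _ = |s - β k| := by rw [abs_sub_comm]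
      rw [habs] at h1
      have hNle : max (s + 2 * |β k| - σ) 0 ≤ 2 * β k := by
        apply max_le
        · rw [habs]; linarith
        · linarith
      rw [hmax, div_le_iff₀ hbk]
      linarith
  · push_neg at hk
    by_cases hN : ∃ k, 0 < max (s + 2 * |β k| - σ) 0
    · obtain ⟨k, hNk⟩ := hN
      have hbk : 0 < β k := by
        by_contra h
        push_neg at h
        rw [hvanish k h] at hNk
        exact lt_irrefl 0 hNk
      have hspos : 0 < s := lt_of_lt_of_le hbk (hk k)
      have habsk : |β k| = β k := abs_of_pos hbk
      have hNk' : max (s + 2 * |β k| - σ) 0 = s + 2 * β k - σ := by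
        have hpos : 0 < s + 2 * |β k| - σ := by
          by_contra h
          push_neg at h
          rw [max_eq_right h] at hNk
          exact lt_irrefl 0 hNk
        rw [habsk] at hpos ⊢
        exact max_eq_left hpos.le
      have hptle : ∀ j, max (s + 2 * |β j| - σ) 0 ≤ |β j| + β j := by
        intro j
        rcases le_or_gt (β j) 0 with h | h
        · rw [hvanish j h]
          have := neg_abs_le (β j)
          linarith
        · have habsj : |β j| = β j := abs_of_pos h
          apply max_le
          · rw [habsj]; linarith
          · rw [habsj]; linarith
      have hkey : max (s + 2 * |β k| - σ) 0 ≤ |β k| + β k - (σ - s) := by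
        rw [hNk', habsk]
        linarith
      have hsplit : ∑ j ∈ Finset.univ.erase k, max (s + 2 * |β j| - σ) 0
          + max (s + 2 * |β k| - σ) 0 = ∑ j, max (s + 2 * |β j| - σ) 0 :=
        Finset.sum_erase_add _ _ (Finset.mem_univ k)
      have hsplit2 : ∑ j ∈ Finset.univ.erase k, (|β j| + β j) + (|β k| + β k)
          = σ + s := by
        rw [Finset.sum_erase_add _ _ (Finset.mem_univ k), Finset.sum_add_distrib,
          ← hsig, ← hsum]
      have hle1 : ∑ j ∈ Finset.univ.erase k, max (s + 2 * |β j| - σ) 0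
          ≤ ∑ j ∈ Finset.univ.erase k, (|β j| + β j) :=
        Finset.sum_le_sum (fun j _ => hptle j)
      have hsumN : ∑ j, max (s + 2 * |β j| - σ) 0 ≤ 2 * s := by linarith
      have hfinal : ∀ j, max (s + 2 * |β j| - σ) 0 / max s |β j|
          ≤ max (s + 2 * |β j| - σ) 0 / s := by
        intro j
        have hms : 0 < max s |β j| := lt_of_lt_of_le hspos (le_max_left _ _)
        rw [div_le_div_iff₀ hms hspos]
        exact mul_le_mul_of_nonneg_left (le_max_left _ _) (hNnn j)
      calc ∑ j, max (s + 2 * |β j| - σ) 0 / max s |β j|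
          ≤ ∑ j, max (s + 2 * |β j| - σ) 0 / s :=
            Finset.sum_le_sum (fun j _ => hfinal j)
        _ = (∑ j, max (s + 2 * |β j| - σ) 0) / s := by rw [Finset.sum_div]
        _ ≤ 2 * s / s := by
            rw [div_le_div_iff₀ hspos hspos]
            nlinarith
        _ = 2 := by field_simp
    · push_neg at hN
      have hz : ∀ j ∈ Finset.univ, max (s + 2 * |β j| - σ) 0 / max s |β j| = 0 := by
        intro j _
        have := le_antisymm (hN j) (hNnn j)
        rw [this, zero_div]
      rw [Finset.sum_eq_zero hz]
      norm_num

lemma global_bound {m : ℕ} (β : Fin m → ℝ) (s σ : ℝ)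
    (hsum : s = ∑ i, β i) (hsig : σ = ∑ i, |β i|) :
    ∑ j, max (|s| + 2 * |β j| - σ) 0 / max |s| |β j| ≤ 2 := by
  rcases le_total 0 s with h | h
  · have := global_aux β s σ h hsum hsig
    simpa [abs_of_nonneg h] using this
  · have hsum' : -s = ∑ i, (fun i => -β i) i := by
      rw [hsum]; simp
    have hsig' : σ = ∑ i, |(fun i => -β i) i| := by
      rw [hsig]; simp
    have := global_aux (fun i => -β i) (-s) σ (by linarith) hsum' hsig'
    simpa [abs_of_nonpos h] using this

end glob

/-- Hard instance for rank-one approximation within the row span: let `A` be the `(d−1) × d`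
matrix whose first column is all ones and whose remaining columns form an identity matrix. Then
every rank-one matrix whose rows are multiples of a single vector in the row span of `A` has
entrywise `ℓ₁` distance at least `2(d − 2)` from `A`. -/
theorem rank_one_in_row_span_hard_instance {d : ℕ} (hd : 2 ≤ d)
    (A : Matrix (Fin (d - 1)) (Fin d) ℝ)
    (hA : ∀ (i : Fin (d - 1)) (j : Fin d),
      A i j = if (j : ℕ) = 0 then 1 else if (j : ℕ) = (i : ℕ) + 1 then 1 else 0) :
    ∀ α β : Fin (d - 1) → ℝ,
      2 * ((d : ℝ) - 2) ≤
        ∑ j : Fin (d - 1), ∑ c : Fin d,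
          |A j c - α j * (∑ i : Fin (d - 1), β i * A i c)| := by
  obtain ⟨n, rfl⟩ : ∃ n, d = n + 1 := ⟨d - 1, by omega⟩
  intro α β
  set s := ∑ i, β i with hs
  set σ := ∑ i, |β i| with hσ
  have hA0 : ∀ i : Fin n, A i (0 : Fin (n + 1)) = 1 := by
    intro i
    rw [hA]
    simp
  have hAsucc : ∀ (i k : Fin n), A i (Fin.succ k) = if k = i then 1 else 0 := by
    intro i k
    rw [hA]
    by_cases h : k = i
    · subst h
      simp
    · have hne : (k : ℕ) + 1 ≠ (i : ℕ) + 1 := by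
        simp only [Fin.ext_iff] at h
        omega
      simp [h, hne, Fin.val_succ, Fin.val_inj]
  have hW0 : ∑ i, β i * A i (0 : Fin (n + 1)) = s := by
    rw [hs]
    apply Finset.sum_congr rfl
    intro i _
    rw [hA0, mul_one]
  have hWs : ∀ k : Fin n, ∑ i, β i * A i (Fin.succ k) = β k := by
    intro k
    have : ∀ i ∈ Finset.univ, β i * A i (Fin.succ k) = if k = i then β i else 0 := by
      intro i _
      rw [hAsucc]
      by_cases h : k = i <;> simp [h]
    rw [Finset.sum_congr rfl this, Finset.sum_ite_eq]
    simp
  have hsingle : ∀ j : Fin n, |β j| + |s - β j| ≤ σ := by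
    intro j
    rw [hs, hσ]
    exact sum_abs_single β j
  have expand : ∀ j : Fin n,
      (∑ c : Fin (n + 1), |A j c - α j * (∑ i, β i * A i c)|)
        = |1 - α j * s| + (|1 - α j * β j| + |α j| * (σ - |β j|)) := by
    intro j
    rw [Fin.sum_univ_succ]
    congr 1
    · rw [hA0, hW0]
    · have hterm : ∀ k : Fin n,
          |A j (Fin.succ k) - α j * (∑ i, β i * A i (Fin.succ k))|
            = |(if k = j then (1:ℝ) else 0) - α j * β k| := by
        intro k
        rw [hAsucc, hWs]
      rw [Finset.sum_congr rfl (fun k _ => hterm k),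
        ← Finset.sum_erase_add _ _ (Finset.mem_univ j), add_comm]
      congr 1
      · simp
      · have h2 : ∀ k ∈ Finset.univ.erase j,
            |(if k = j then (1:ℝ) else 0) - α j * β k| = |α j| * |β k| := by
          intro k hk
          rw [if_neg (Finset.ne_of_mem_erase hk), zero_sub, abs_neg, abs_mul]
        rw [Finset.sum_congr rfl h2, ← Finset.mul_sum]
        congr 1
        have h3 : ∑ i ∈ Finset.univ.erase j, |β i| + |β j| = ∑ i, |β i| :=
          Finset.sum_erase_add _ _ (Finset.mem_univ j)
        rw [hσ]
        linarith
  have hrow : ∀ j : Fin n,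
      2 - max (|s| + 2 * |β j| - σ) 0 / max |s| |β j|
        ≤ ∑ c : Fin (n + 1), |A j c - α j * (∑ i, β i * A i c)| := by
    intro j
    rw [expand j]
    have := row_bound (α j) s (β j) σ (hsingle j)
    linarith
  have hglob := global_bound β s σ hs hσ
  have hcard : (Finset.univ : Finset (Fin (n + 1 - 1))).card = n := by simp
  have hstep : ∑ j : Fin (n + 1 - 1),
      (2 - max (|s| + 2 * |β j| - σ) 0 / max |s| |β j|)
      ≤ ∑ j : Fin (n + 1 - 1), ∑ c : Fin (n + 1),
          |A j c - α j * (∑ i, β i * A i c)| :=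
    Finset.sum_le_sum (fun j _ => hrow j)
  have hconst : ∑ j : Fin (n + 1 - 1),
      (2 - max (|s| + 2 * |β j| - σ) 0 / max |s| |β j|)
      = 2 * n - ∑ j : Fin (n + 1 - 1), max (|s| + 2 * |β j| - σ) 0 / max |s| |β j| := by
    rw [Finset.sum_sub_distrib, Finset.sum_const, hcard]
    push_cast
    ring
  have hcast : 2 * ((((n : ℕ) + 1 : ℕ) : ℝ) - 2) = 2 * (n : ℝ) - 2 := by
    push_cast
    ring
  rw [hcast]
  calc (2 : ℝ) * n - 2 ≤ 2 * n -
        ∑ j : Fin (n + 1 - 1), max (|s| + 2 * |β j| - σ) 0 / max |s| |β j| := by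
        linarith
    _ = ∑ j : Fin (n + 1 - 1),
        (2 - max (|s| + 2 * |β j| - σ) 0 / max |s| |β j|) := hconst.symm
    _ ≤ _ := hstep
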